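/- Let m ∈ ℂ and let μ ∈ ℝ with μ ≠ 0. Suppose f : (0,∞) → ℂ is twice continuously differentiable, satisfies −f''(x) + (m² − 1/4)·x^{−2}·f(x) = μ²·f(x) for all x > 0, and is square integrable: ∫₀^∞ |f(x)|² dx < ∞. Then f is identically zero. -/

import Mathlib

open MeasureTheory Complex

lemma hasDerivAt_abs_sq {f : ℝ → ℂ} {f' : ℂ} {x : ℝ} (h : HasDerivAt f f' x) :
    HasDerivAt (fun t => ‖f t‖ ^ 2)
      (2 * ((starRingEnd ℂ) (f x) * f').re) x := by
  have hre : HasDerivAt (fun t => (f t).re) f'.re x :=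
    (Complex.reCLM.hasFDerivAt.comp_hasDerivAt x h)
  have him : HasDerivAt (fun t => (f t).im) f'.im x :=
    (Complex.imCLM.hasFDerivAt.comp_hasDerivAt x h)
  have h2 := (hre.mul hre).add (him.mul him)
  have heq : (fun t => ‖f t‖ ^ 2)
      = fun t => (f t).re * (f t).re + (f t).im * (f t).im := by
    funext t
    rw [Complex.sq_norm, Complex.normSq_apply]
  rw [heq]
  refine h2.congr_deriv ?_
  simp [Complex.mul_re, Complex.conj_re, Complex.conj_im]
  ring

lemma hasDerivAt_re_conj_mul {f g : ℝ → ℂ} {f' g' : ℂ} {x : ℝ}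
    (hf : HasDerivAt f f' x) (hg : HasDerivAt g g' x) :
    HasDerivAt (fun t => ((starRingEnd ℂ) (f t) * g t).re)
      (((starRingEnd ℂ) f' * g x).re + ((starRingEnd ℂ) (f x) * g').re) x := by
  have hconj : HasDerivAt (fun t => (starRingEnd ℂ) (f t)) ((starRingEnd ℂ) f') x := by
    have := hf.star
    exact this
  have h2 := (Complex.reCLM.hasFDerivAt.comp_hasDerivAt x (hconj.mul hg))
  exact h2

lemma mono_aux {F F' : ℝ → ℝ} {a : ℝ} (ha : 0 < a)
    (hd : ∀ x ∈ Set.Ioi (0:ℝ), HasDerivAt F (F' x) x)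
    (h0 : ∀ x ∈ Set.Ioi (0:ℝ), a ≤ x → 0 ≤ F' x) :
    MonotoneOn F (Set.Ici a) := by
  apply monotoneOn_of_deriv_nonneg (convex_Ici a)
  · intro x hx
    exact (hd x (lt_of_lt_of_le ha hx)).continuousAt.continuousWithinAt
  · intro x hx
    rw [interior_Ici] at hx
    exact ((hd x (ha.trans hx)).differentiableAt).differentiableWithinAt
  · intro x hx
    rw [interior_Ici] at hx
    rw [(hd x (ha.trans hx)).deriv]
    exact h0 x (ha.trans hx) hx.le

lemma key_re1 (a b v : ℂ) (μ : ℝ) :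
    2 * ((starRingEnd ℂ) b * ((v - (μ:ℂ)^2) * a)).re
      + μ ^ 2 * (2 * ((starRingEnd ℂ) a * b).re)
    = 2 * (v * (a * (starRingEnd ℂ) b)).re := by
  have h1 : (((μ:ℂ))^2).re = μ^2 := by simp [pow_two, Complex.mul_re]
  have h2 : (((μ:ℂ))^2).im = 0 := by simp [pow_two, Complex.mul_im]
  simp [h1, h2, Complex.mul_re, Complex.mul_im, Complex.sub_re, Complex.sub_im,
    Complex.conj_re, Complex.conj_im, Complex.ofReal_re, Complex.ofReal_im]
  ring

lemma key_re2 (a b v : ℂ) (μ : ℝ) :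
    ((starRingEnd ℂ) b * b).re + ((starRingEnd ℂ) a * ((v - (μ:ℂ)^2) * a)).re
    = ‖b‖ ^ 2 + v.re * ‖a‖ ^ 2 - μ ^ 2 * ‖a‖ ^ 2 := by
  have h1 : (((μ:ℂ))^2).re = μ^2 := by simp [pow_two, Complex.mul_re]
  have h2 : (((μ:ℂ))^2).im = 0 := by simp [pow_two, Complex.mul_im]
  rw [Complex.sq_norm, Complex.sq_norm]
  simp [h1, h2, Complex.mul_re, Complex.mul_im, Complex.sub_re, Complex.sub_im,
    Complex.conj_re, Complex.conj_im, Complex.ofReal_re, Complex.ofReal_im,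
    Complex.normSq_apply]
  ring

set_option maxHeartbeats 2000000 in
/-- No positive eigenvalues: a twice continuously differentiable, square-integrable solution
of `−f'' + (m² − 1/4)x⁻² f = μ² f` on `(0,∞)` with `μ ≠ 0` vanishes identically. -/
theorem stmt19 (m : ℂ) (μ : ℝ) (hμ : μ ≠ 0) (f : ℝ → ℂ)
    (hf : ∀ x ∈ Set.Ioi (0 : ℝ), DifferentiableAt ℝ f x)
    (hf' : ∀ x ∈ Set.Ioi (0 : ℝ), DifferentiableAt ℝ (deriv f) x)
    (hf'' : ContinuousOn (deriv (deriv f)) (Set.Ioi (0 : ℝ)))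
    (hode : ∀ x ∈ Set.Ioi (0 : ℝ),
      -(deriv (deriv f) x) + (m ^ 2 - 1 / 4) * ((x : ℂ)) ^ (-2 : ℤ) * f x = ((μ : ℂ)) ^ 2 * f x)
    (hL2 : IntegrableOn (fun x : ℝ => ‖f x‖ ^ 2) (Set.Ioi (0 : ℝ))) :
    ∀ x ∈ Set.Ioi (0 : ℝ), f x = 0 := by
  intro x₀ hx₀
  by_contra hne
  have hx₀0 : (0:ℝ) < x₀ := hx₀
  have hμ2 : (0:ℝ) < μ ^ 2 := by positivity
  -- notation
  set g := deriv f with hg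
  set V : ℝ → ℂ := fun x => (m ^ 2 - 1 / 4) * ((x : ℂ)) ^ (-2 : ℤ) with hV
  set N : ℝ → ℝ := fun x => ‖f x‖ ^ 2 with hNdef
  set Nd : ℝ → ℝ := fun x => ‖g x‖ ^ 2 with hNddef
  set E : ℝ → ℝ := fun x => Nd x + μ ^ 2 * N x with hEdef
  set G : ℝ → ℝ := fun x => ((starRingEnd ℂ) (f x) * g x).re with hGdef
  set Cm : ℝ := ‖m ^ 2 - 1 / 4‖ with hCm
  set K : ℝ := 1 + (μ ^ 2)⁻¹ with hKdef
  have hK0 : 0 < K := by positivity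
  set c : ℝ := Cm * K with hcdef
  have hc0 : 0 ≤ c := by positivity
  -- rewritten ODE
  have hode' : ∀ x ∈ Set.Ioi (0:ℝ), deriv g x = (V x - (μ:ℂ) ^ 2) * f x := by
    intro x hx
    have h := hode x hx
    simp only [hV]
    linear_combination -h
  -- derivative facts
  have hfd : ∀ x ∈ Set.Ioi (0:ℝ), HasDerivAt f (g x) x := fun x hx => (hf x hx).hasDerivAt
  have hgd : ∀ x ∈ Set.Ioi (0:ℝ), HasDerivAt g ((V x - (μ:ℂ) ^ 2) * f x) x := by
    intro x hx
    have := (hf' x hx).hasDerivAt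
    rwa [hode' x hx] at this
  -- |V x| bound
  have hVabs : ∀ x ∈ Set.Ioi (0:ℝ), ‖V x‖ = Cm * (x ^ 2)⁻¹ := by
    intro x hx
    have hx0 : (0:ℝ) < x := hx
    simp only [hV, hCm, norm_mul, norm_zpow, Complex.norm_real, Real.norm_eq_abs, abs_of_pos hx0]
    rw [zpow_neg]
    norm_num
  -- derivative of N
  have hNd : ∀ x ∈ Set.Ioi (0:ℝ), HasDerivAt N (2 * G x) x := by
    intro x hx
    exact hasDerivAt_abs_sq (hfd x hx)
  -- derivative of E and its lower bound
  have hEd : ∀ x ∈ Set.Ioi (0:ℝ),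
      HasDerivAt E (2 * (V x * (f x * (starRingEnd ℂ) (g x))).re) x := by
    intro x hx
    have h1 := hasDerivAt_abs_sq (hgd x hx)
    have h2 := HasDerivAt.const_mul (μ ^ 2) (hasDerivAt_abs_sq (hfd x hx))
    have := h1.add h2
    rw [key_re1 (f x) (g x) (V x) μ] at this
    exact this
  have hEnonneg : ∀ x, 0 ≤ E x := by
    intro x
    simp only [hEdef, hNdef, hNddef]
    positivity
  have hNE : ∀ x, N x + Nd x ≤ K * E x := by
    intro x
    have hE : E x = Nd x + μ ^ 2 * N x := rfl
    have hN0 : 0 ≤ N x := by simp only [hNdef]; positivity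
    have hNd0 : 0 ≤ Nd x := by simp only [hNddef]; positivity
    have hKK : K = 1 + (μ ^ 2)⁻¹ := rfl
    have hinv : (μ ^ 2)⁻¹ * μ ^ 2 = 1 := inv_mul_cancel₀ hμ2.ne'
    rw [hKK, hE]
    nlinarith [mul_nonneg (inv_nonneg.mpr hμ2.le) hNd0, mul_nonneg hμ2.le hN0]
  have hEbound : ∀ x ∈ Set.Ioi (0:ℝ),
      -(c * (x ^ 2)⁻¹ * E x) ≤ 2 * (V x * (f x * (starRingEnd ℂ) (g x))).re := by
    intro x hx
    have habs : |2 * (V x * (f x * (starRingEnd ℂ) (g x))).re|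
        ≤ ‖V x‖ * (N x + Nd x) := by
      rw [abs_mul, _root_.abs_two]
      have h1 : |(V x * (f x * (starRingEnd ℂ) (g x))).re| ≤
          ‖V x‖ * (‖f x‖ * ‖g x‖) := by
        calc |(V x * (f x * (starRingEnd ℂ) (g x))).re| ≤
            ‖V x * (f x * (starRingEnd ℂ) (g x))‖ := Complex.abs_re_le_norm _
          _ = ‖V x‖ * (‖f x‖ * ‖g x‖) := by
              simp [map_mul]
      have h2 : 2 * (‖f x‖ * ‖g x‖) ≤ N x + Nd x := by
        simp only [hNdef, hNddef]
        nlinarith [sq_nonneg (‖f x‖ - ‖g x‖)]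
      nlinarith [norm_nonneg (V x)]
    have := (abs_le.mp habs).1
    have h3 : ‖V x‖ * (N x + Nd x) ≤ Cm * (x ^ 2)⁻¹ * (K * E x) := by
      rw [hVabs x hx]
      have hx0 : (0:ℝ) < x := hx
      have : (0:ℝ) ≤ Cm * (x ^ 2)⁻¹ := by positivity
      exact mul_le_mul_of_nonneg_left (hNE x) this
    have h4 : Cm * (x ^ 2)⁻¹ * (K * E x) = c * (x ^ 2)⁻¹ * E x := by
      simp only [hcdef]; ring
    linarith
  -- φ = E * exp(-c/x) is monotone on (0,∞)
  set φ : ℝ → ℝ := fun x => E x * Real.exp (-c / x) with hφdef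
  have hφd : ∀ x ∈ Set.Ioi (0:ℝ),
      HasDerivAt φ ((2 * (V x * (f x * (starRingEnd ℂ) (g x))).re) * Real.exp (-c / x)
        + E x * (Real.exp (-c / x) * (c * (x ^ 2)⁻¹))) x := by
    intro x hx
    have hx0 : (0:ℝ) < x := hx
    have hinv : HasDerivAt (fun x : ℝ => -c / x) (c * (x ^ 2)⁻¹) x := by
      have h := (hasDerivAt_inv hx0.ne').const_mul (-c)
      have heq : (fun y : ℝ => -c * y⁻¹) = fun y : ℝ => -c / y := by
        funext t; ring
      rw [heq] at h
      refine h.congr_deriv ?_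
      ring
    have hexp := hinv.exp
    exact (hEd x hx).mul hexp
  have hφmono : MonotoneOn φ (Set.Ici x₀) := by
    apply mono_aux hx₀0 hφd
    intro x hx _
    have hx0 : (0:ℝ) < x := hx
    have hb := hEbound x hx
    have hexp : (0:ℝ) < Real.exp (-c / x) := Real.exp_pos _
    have hE0 := hEnonneg x
    nlinarith
  -- E is bounded below by δ on [x₀,∞)
  have hNx₀ : 0 < N x₀ := by
    simp only [hNdef]
    have := norm_pos_iff.mpr hne
    positivity
  have hEx₀ : 0 < E x₀ := by
    have : 0 ≤ Nd x₀ := by simp only [hNddef]; positivity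
    simp only [hEdef]; nlinarith
  set δ : ℝ := E x₀ * Real.exp (-c / x₀) with hδdef
  have hδ0 : 0 < δ := by positivity
  have hElow : ∀ x, x₀ ≤ x → δ ≤ E x := by
    intro x hx
    have hx0 : (0:ℝ) < x := lt_of_lt_of_le hx₀0 hx
    have h1 : φ x₀ ≤ φ x := hφmono Set.self_mem_Ici hx hx
    have h2 : Real.exp (-c / x) ≤ 1 := by
      rw [Real.exp_le_one_iff, neg_div]
      exact neg_nonpos.mpr (div_nonneg hc0 hx0.le)
    have h3 : φ x ≤ E x := by
      calc φ x = E x * Real.exp (-c / x) := rfl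
        _ ≤ E x * 1 := mul_le_mul_of_nonneg_left h2 (hEnonneg x)
        _ = E x := mul_one _
    have h4 : δ = φ x₀ := rfl
    linarith
  -- x₁ : where |V| ≤ μ²
  set x₁ : ℝ := max x₀ (Real.sqrt (Cm / μ ^ 2) + 1) with hx₁def
  have hx₁pos : 0 < x₁ := lt_of_lt_of_le hx₀0 (le_max_left _ _)
  have hx₁x₀ : x₀ ≤ x₁ := le_max_left _ _
  have hVsmall : ∀ x, x₁ ≤ x → Cm * (x ^ 2)⁻¹ ≤ μ ^ 2 := by
    intro x hx
    have hs : Real.sqrt (Cm / μ ^ 2) ≤ x := by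
      have h := le_max_right x₀ (Real.sqrt (Cm / μ ^ 2) + 1)
      simp only [hx₁def] at hx
      linarith
    have hx0 : 0 < x := lt_of_lt_of_le hx₁pos hx
    have hsq : Cm / μ ^ 2 ≤ x ^ 2 := by
      have h0 : (0:ℝ) ≤ Cm / μ ^ 2 := by positivity
      calc Cm / μ ^ 2 = Real.sqrt (Cm / μ ^ 2) ^ 2 := (Real.sq_sqrt h0).symm
        _ ≤ x ^ 2 := pow_le_pow_left₀ (Real.sqrt_nonneg _) hs 2
    rw [div_le_iff₀ hμ2] at hsq
    have hx2 : (0:ℝ) < x ^ 2 := by positivity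
    have h2 := mul_le_mul_of_nonneg_right hsq (inv_nonneg.mpr hx2.le)
    calc Cm * (x ^ 2)⁻¹ ≤ x ^ 2 * μ ^ 2 * (x ^ 2)⁻¹ := h2
      _ = μ ^ 2 := by field_simp
  -- derivative of G
  have hGd : ∀ x ∈ Set.Ioi (0:ℝ),
      HasDerivAt G (Nd x + (V x).re * N x - μ ^ 2 * N x) x := by
    intro x hx
    have h := hasDerivAt_re_conj_mul (hfd x hx) (hgd x hx)
    rw [key_re2 (f x) (g x) (V x) μ] at h
    simp only [hNdef, hNddef]
    exact h
  -- continuity and integrability of N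
  have hNcont : ContinuousOn N (Set.Ioi (0:ℝ)) := by
    intro x hx
    have h1 : ContinuousAt (fun t => ‖f t‖ ^ 2) x := ((hf x hx).continuousAt.norm.pow 2)
    have h2 : ContinuousAt N x := by
      simpa only [hNdef] using h1
    exact h2.continuousWithinAt
  have hIint : ∀ u ∈ Set.Ioi (0:ℝ), IntervalIntegrable N volume x₁ u := by
    intro u hu
    rw [intervalIntegrable_iff]
    apply hL2.mono_set
    intro t ht
    rcases Set.mem_uIoc.mp ht with h | h
    · exact lt_trans hx₁pos h.1
    · exact lt_trans hu h.1
  set I : ℝ → ℝ := fun u => ∫ t in x₁..u, N t with hIdef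
  have hId : ∀ x ∈ Set.Ioi (0:ℝ), HasDerivAt I (N x) x := by
    intro x hx
    exact intervalIntegral.integral_hasDerivAt_right (hIint x hx)
      (hNcont.stronglyMeasurableAtFilter isOpen_Ioi x hx)
      ((hNcont x hx).continuousAt (isOpen_Ioi.mem_nhds hx))
  -- bound the integral I by the full integral A
  set A : ℝ := ∫ t in Set.Ioi (0:ℝ), N t with hAdef
  have hNnonneg : ∀ x, 0 ≤ N x := by
    intro x; simp only [hNdef]; positivity
  have hIA : ∀ u, x₁ ≤ u → I u ≤ A := by
    intro u hu
    have h1 : I u = ∫ t in Set.Ioc x₁ u, N t := intervalIntegral.integral_of_le hu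
    rw [h1]
    apply setIntegral_mono_set hL2
    · exact Filter.Eventually.of_forall hNnonneg
    · apply Filter.Eventually.of_forall
      intro t ht
      exact lt_trans hx₁pos ht.1
  -- ψ is monotone on [x₁, ∞)
  set ψ : ℝ → ℝ := fun x => G x - δ * x + 3 * μ ^ 2 * I x with hψdef
  have hψd : ∀ x ∈ Set.Ioi (0:ℝ),
      HasDerivAt ψ ((Nd x + (V x).re * N x - μ ^ 2 * N x) - δ + 3 * μ ^ 2 * N x) x := by
    intro x hx
    have h1 := (hGd x hx).sub ((hasDerivAt_id x).const_mul δ)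
    have h2 := (hId x hx).const_mul (3 * μ ^ 2)
    have h := h1.add h2
    simp only [mul_one] at h
    exact h
  have hψmono : MonotoneOn ψ (Set.Ici x₁) := by
    apply mono_aux hx₁pos hψd
    intro x hx hx₁x
    have hNx := hNnonneg x
    have hEn := hElow x (le_trans hx₁x₀ hx₁x)
    have hVre : -(μ ^ 2) ≤ (V x).re := by
      have h1 : |(V x).re| ≤ ‖V x‖ := Complex.abs_re_le_norm _
      rw [hVabs x hx] at h1
      have h2 := hVsmall x hx₁x
      have := (abs_le.mp h1).1
      linarith
    have hEx : E x = Nd x + μ ^ 2 * N x := rfl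
    have key : Nd x + (V x).re * N x - μ ^ 2 * N x ≥ δ - 3 * μ ^ 2 * N x := by
      nlinarith
    linarith
  -- linear growth of G
  have hGgrow : ∀ x, x₁ ≤ x → G x₁ - δ * x₁ - 3 * μ ^ 2 * A + δ * x ≤ G x := by
    intro x hx
    have h1 : ψ x₁ ≤ ψ x := hψmono Set.self_mem_Ici hx hx
    have h2 : I x₁ = 0 := by simp only [hIdef, intervalIntegral.integral_same]
    have h3 := hIA x hx
    have h4 : ψ x₁ = G x₁ - δ * x₁ := by
      simp only [hψdef, h2]; ring
    have h5 : ψ x = G x - δ * x + 3 * μ ^ 2 * I x := rfl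
    have h6 : 3 * μ ^ 2 * I x ≤ 3 * μ ^ 2 * A := by nlinarith
    rw [h4] at h1
    rw [h5] at h1
    linarith
  -- x₂ : where G ≥ 1
  set B : ℝ := G x₁ - δ * x₁ - 3 * μ ^ 2 * A with hBdef
  set x₂ : ℝ := max x₁ ((1 - B) / δ) with hx₂def
  have hx₂pos : 0 < x₂ := lt_of_lt_of_le hx₁pos (le_max_left _ _)
  have hx₂x₁ : x₁ ≤ x₂ := le_max_left _ _
  have hG1 : ∀ x, x₂ ≤ x → 1 ≤ G x := by
    intro x hx
    have h1 := hGgrow x (le_trans hx₂x₁ hx)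
    have h2 : (1 - B) / δ ≤ x := le_trans (le_max_right _ _) hx
    have h3 : 1 - B ≤ δ * x := by
      rw [div_le_iff₀ hδ0] at h2
      linarith [mul_comm δ x]
    linarith
  -- N grows at least linearly beyond x₂
  set θ : ℝ → ℝ := fun x => N x - 2 * x with hθdef
  have hθd : ∀ x ∈ Set.Ioi (0:ℝ), HasDerivAt θ (2 * G x - 2) x := by
    intro x hx
    have h := (hNd x hx).sub ((hasDerivAt_id x).const_mul 2)
    simp only [mul_one] at h
    exact h
  have hθmono : MonotoneOn θ (Set.Ici x₂) := by
    apply mono_aux hx₂pos hθd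
    intro x hx hx₂x
    have := hG1 x hx₂x
    linarith
  have hNbig : ∀ x, x₂ + 1 ≤ x → 2 ≤ N x := by
    intro x hx
    have hx₂x : x₂ ≤ x := by linarith
    have h1 : θ x₂ ≤ θ x := hθmono Set.self_mem_Ici hx₂x hx₂x
    have h2 : θ x₂ = N x₂ - 2 * x₂ := rfl
    have h3 : θ x = N x - 2 * x := rfl
    have h4 := hNnonneg x₂
    rw [h2, h3] at h1
    linarith
  -- contradiction with integrability
  have hsub : Set.Ioi (x₂ + 1) ⊆ Set.Ioi (0:ℝ) :=
    Set.Ioi_subset_Ioi (by linarith)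
  have hNS : IntegrableOn N (Set.Ioi (x₂ + 1)) := hL2.mono_set hsub
  have hconst : IntegrableOn (fun _ : ℝ => (2:ℝ)) (Set.Ioi (x₂ + 1)) := by
    apply Integrable.mono hNS
    · exact aestronglyMeasurable_const
    · rw [ae_restrict_iff' measurableSet_Ioi]
      apply Filter.Eventually.of_forall
      intro x hx
      have h1 := hNbig x (le_of_lt hx)
      have h2 := hNnonneg x
      rw [Real.norm_eq_abs, Real.norm_eq_abs, _root_.abs_of_nonneg h2]
      rw [_root_.abs_of_nonneg (by norm_num : (0:ℝ) ≤ 2)]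
      exact h1
  rw [integrableOn_const_iff] at hconst
  rcases hconst with h | h
  · norm_num at h
  · rw [Real.volume_Ioi] at h
    exact (lt_irrefl _ h).elim
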